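/- If f, g ∈ k[X_1, …, X_t] are L-homogeneous polynomials with f ∉ I and g ∉ I, then fg ∉ I. In other words, S(p,λ) = k[X_1, …, X_t]/I is an L-graded domain: any product of nonzero homogeneous elements of S(p,λ) is nonzero. -/

import Mathlib

open scoped BigOperators

/-- The rank-one abelian group `L(p)`: the quotient of the free abelian group `ℤ^t`
on generators `e 0, …, e (t-1)` by the subgroup generated by the elements
`p i • e i - p 0 • e 0`. -/
abbrev LGrp (t : ℕ) (ht : 0 < t) (p : Fin t → ℕ) : Type :=
  (Fin t → ℤ) ⧸ AddSubgroup.closure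
    (Set.range fun i : Fin t =>
      (p i : ℤ) • Pi.single i (1 : ℤ) - (p ⟨0, ht⟩ : ℤ) • Pi.single ⟨0, ht⟩ (1 : ℤ))

/-- The image `x i` of the generator `e i` in `L(p)`. -/
def xgen (t : ℕ) (ht : 0 < t) (p : Fin t → ℕ) (i : Fin t) : LGrp t ht p :=
  QuotientAddGroup.mk (Pi.single i 1)

/-- The canonical element `c = p 0 • x 0` of `L(p)`. -/
def cElem (t : ℕ) (ht : 0 < t) (p : Fin t → ℕ) : LGrp t ht p :=
  (p ⟨0, ht⟩ : ℤ) • xgen t ht p ⟨0, ht⟩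

/-- The dualizing element `ω = (t - 2) • c - (x 0 + ⋯ + x (t-1))` of `L(p)`. -/
def omegaElem (t : ℕ) (ht : 0 < t) (p : Fin t → ℕ) : LGrp t ht p :=
  ((t : ℤ) - 2) • cElem t ht p - ∑ i, xgen t ht p i

/-- The positive cone `L₊ = {a 0 • x 0 + ⋯ + a (t-1) • x (t-1) : a i ∈ ℕ}`;
`x ≤ y` means `y - x ∈ L₊`. -/
def posCone (t : ℕ) (ht : 0 < t) (p : Fin t → ℕ) : Set (LGrp t ht p) :=
  { y | ∃ a : Fin t → ℕ, y = ∑ i, (a i : ℤ) • xgen t ht p i }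

open MvPolynomial in
/-- The ideal `I` of `k[X 0, …, X (t-1)]` generated by the canonical relations
`X i ^ p i - (X 1 ^ p 1 - λ i * X 0 ^ p 0)` for `2 ≤ i`. -/
noncomputable def canonIdeal (t : ℕ) (ht : 2 ≤ t) (p : Fin t → ℕ) (k : Type) [Field k]
    (lam : Fin t → k) : Ideal (MvPolynomial (Fin t) k) :=
  Ideal.span { f | ∃ i : Fin t, 2 ≤ (i : ℕ) ∧
    f = X i ^ p i -
      (X (⟨1, by omega⟩ : Fin t) ^ p (⟨1, by omega⟩ : Fin t) -
        C (lam i) * X (⟨0, by omega⟩ : Fin t) ^ p (⟨0, by omega⟩ : Fin t)) }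

/-- The weight function assigning to the variable `X i` the degree `x i ∈ L(p)`;
a polynomial is `L`-homogeneous of degree `d` iff it is weighted homogeneous of
degree `d` with respect to these weights. -/
def wtL (t : ℕ) (ht : 2 ≤ t) (p : Fin t → ℕ) : Fin t → LGrp t (by omega) p :=
  xgen t (by omega) p

namespace GDaux
open MvPolynomial


variable {t : ℕ} {k : Type} [Field k]

def i0 (ht : 2 ≤ t) : Fin t := ⟨0, by omega⟩
def i1 (ht : 2 ≤ t) : Fin t := ⟨1, by omega⟩

noncomputable def hpoly (ht : 2 ≤ t) (p : Fin t → ℕ) (lam : Fin t → k) (i : Fin t) :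
    MvPolynomial (Fin t) k :=
  X (i1 ht) ^ p (i1 ht) - C (lam i) * X (i0 ht) ^ p (i0 ht)

noncomputable def red (p : Fin t → ℕ) (e : Fin t →₀ ℕ) : Fin t →₀ ℕ :=
  Finsupp.equivFunOnFinite.symm fun i => if 2 ≤ (i : ℕ) then e i % p i else e i

@[simp] lemma red_apply (p : Fin t → ℕ) (e : Fin t →₀ ℕ) (i : Fin t) :
    red p e i = if 2 ≤ (i : ℕ) then e i % p i else e i := rfl

noncomputable def nf (ht : 2 ≤ t) (p : Fin t → ℕ) (lam : Fin t → k) (e : Fin t →₀ ℕ) :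
    MvPolynomial (Fin t) k :=
  monomial (red p e) 1 *
    ∏ i : Fin t, hpoly ht p lam i ^ (if 2 ≤ (i : ℕ) then e i / p i else 0)

noncomputable def NF (ht : 2 ≤ t) (p : Fin t → ℕ) (lam : Fin t → k) :
    MvPolynomial (Fin t) k →+ MvPolynomial (Fin t) k where
  toFun f := (AddMonoidAlgebra.coeff f).sum fun e c => C c * nf ht p lam e
  map_zero' := Finsupp.sum_zero_index
  map_add' f g := by
    show Finsupp.sum (AddMonoidAlgebra.coeff f + AddMonoidAlgebra.coeff g) _ = _
    exact Finsupp.sum_add_index' (fun e => by simp) (fun e c1 c2 => by rw [map_add, add_mul])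

lemma NF_monomial (ht : 2 ≤ t) (p : Fin t → ℕ) (lam : Fin t → k) (e : Fin t →₀ ℕ) (c : k) :
    NF ht p lam (monomial e c) = C c * nf ht p lam e := by
  have h : Finsupp.sum (Finsupp.single e c) (fun e c => (C c : MvPolynomial (Fin t) k) * nf ht p lam e) = C c * nf ht p lam e :=
    Finsupp.sum_single_index (by rw [map_zero, zero_mul])
  exact h


variable (ht : 2 ≤ t) (p : Fin t → ℕ) (lam : Fin t → k)

lemma nf_add_low (e d : Fin t →₀ ℕ) (hd : ∀ i : Fin t, 2 ≤ (i : ℕ) → d i = 0) :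
    nf ht p lam (e + d) = monomial d 1 * nf ht p lam e := by
  unfold nf
  have h1 : red p (e + d) = d + red p e := by
    ext i
    simp only [red_apply, Finsupp.add_apply]
    by_cases hi : 2 ≤ (i : ℕ)
    · simp [hi, hd i hi]
    · simp [hi, Nat.add_comm]
  have h2 : ∀ i : Fin t, (if 2 ≤ (i : ℕ) then (e + d) i / p i else 0)
      = (if 2 ≤ (i : ℕ) then e i / p i else 0) := by
    intro i
    by_cases hi : 2 ≤ (i : ℕ)
    · simp [hi, Finsupp.add_apply, hd i hi]
    · simp [hi]
  rw [h1, Finset.prod_congr rfl (fun i _ => by rw [h2 i]), ← mul_assoc, monomial_mul, one_mul]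

lemma nf_add_single (e : Fin t →₀ ℕ) (j : Fin t) (hj : 2 ≤ (j : ℕ)) (hpj : 0 < p j) :
    nf ht p lam (e + Finsupp.single j (p j)) = nf ht p lam e * hpoly ht p lam j := by
  unfold nf
  have h1 : red p (e + Finsupp.single j (p j)) = red p e := by
    ext i
    simp only [red_apply, Finsupp.add_apply]
    by_cases hij : i = j
    · subst hij; simp [hj, Nat.add_mod_right]
    · simp [Finsupp.single_eq_of_ne' (Ne.symm hij)]
  have h2 : ∀ i : Fin t, (if 2 ≤ (i : ℕ) then (e + Finsupp.single j (p j)) i / p i else 0)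
      = (if 2 ≤ (i : ℕ) then e i / p i else 0) + (if i = j then 1 else 0) := by
    intro i
    by_cases hij : i = j
    · subst hij
      simp [hj, Finsupp.add_apply, Nat.add_div_right _ hpj]
    · simp [Finsupp.add_apply, Finsupp.single_eq_of_ne (Ne.symm hij), hij]
  rw [h1, Finset.prod_congr rfl (fun i _ => by rw [h2 i, pow_add])]
  rw [Finset.prod_mul_distrib]
  have h3 : (∏ i : Fin t, hpoly ht p lam i ^ (if i = j then 1 else 0)) = hpoly ht p lam j := by
    have : ∀ i : Fin t, hpoly ht p lam i ^ (if i = j then 1 else 0)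
        = (if i = j then hpoly ht p lam i else 1) := by
      intro i; by_cases hij : i = j <;> simp [hij]
    rw [Finset.prod_congr rfl (fun i _ => this i), Finset.prod_ite_eq' Finset.univ j]
    simp
  rw [h3]; ring

lemma monomial_one_eq (e : Fin t →₀ ℕ) :
    (monomial e (1 : k) : MvPolynomial (Fin t) k) = ∏ i : Fin t, X i ^ e i := by
  rw [← prod_X_pow_eq_monomial]
  refine (Finset.prod_subset (f := fun i => (X i ^ e i : MvPolynomial (Fin t) k)) e.support.subset_univ fun i _ hi => ?_)
  simp [Finsupp.notMem_support_iff.mp hi]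

lemma monomial_decomp (e : Fin t →₀ ℕ) :
    (monomial e (1 : k) : MvPolynomial (Fin t) k) = monomial (red p e) 1 *
      ∏ i : Fin t, (X i ^ p i) ^ (if 2 ≤ (i : ℕ) then e i / p i else 0) := by
  rw [monomial_one_eq, monomial_one_eq, ← Finset.prod_mul_distrib]
  refine Finset.prod_congr rfl fun i _ => ?_
  rw [← pow_mul, ← pow_add]
  congr 1
  by_cases hi : 2 ≤ (i : ℕ)
  · simp [hi, Nat.mod_add_div]
  · simp [hi]

lemma gen_mem (j : Fin t) (hj : 2 ≤ (j : ℕ)) :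
    X j ^ p j - hpoly ht p lam j ∈ canonIdeal t ht p k lam :=
  Ideal.subset_span ⟨j, hj, rfl⟩

lemma Q_nf (e : Fin t →₀ ℕ) :
    Ideal.Quotient.mk (canonIdeal t ht p k lam) (nf ht p lam e) =
      Ideal.Quotient.mk (canonIdeal t ht p k lam) (monomial e 1) := by
  conv_rhs => rw [monomial_decomp p e]
  unfold nf
  rw [map_mul, map_mul, map_prod, map_prod]
  congr 1
  refine Finset.prod_congr rfl fun j _ => ?_
  by_cases hj : 2 ≤ (j : ℕ)
  · have h := (Ideal.Quotient.eq.mpr (gen_mem ht p lam j hj)).symm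
    rw [map_pow, map_pow, h]
  · simp [hj]

lemma Q_NF (f : MvPolynomial (Fin t) k) :
    Ideal.Quotient.mk (canonIdeal t ht p k lam) (NF ht p lam f) =
      Ideal.Quotient.mk (canonIdeal t ht p k lam) f := by
  conv_lhs => rw [f.as_sum]
  conv_rhs => rw [f.as_sum]
  rw [map_sum (NF ht p lam), map_sum, map_sum]
  refine Finset.sum_congr rfl fun v _ => ?_
  rw [NF_monomial, map_mul, Q_nf ht p lam, ← map_mul, C_mul_monomial, mul_one]

lemma single1_zero (i : Fin t) (hi : 2 ≤ (i : ℕ)) :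
    (Finsupp.single (i1 ht) (p (i1 ht)) : Fin t →₀ ℕ) i = 0 := by
  refine Finsupp.single_eq_of_ne' fun h => ?_
  have : ((i1 ht : Fin t) : ℕ) = (i : ℕ) := by rw [h]
  simp [i1] at this; omega

lemma single0_zero (i : Fin t) (hi : 2 ≤ (i : ℕ)) :
    (Finsupp.single (i0 ht) (p (i0 ht)) : Fin t →₀ ℕ) i = 0 := by
  refine Finsupp.single_eq_of_ne' fun h => ?_
  have : ((i0 ht : Fin t) : ℕ) = (i : ℕ) := by rw [h]
  simp [i0] at this; omega

lemma NF_monomial_mul_gen (hp : ∀ i, 2 ≤ p i) (e : Fin t →₀ ℕ) (c : k) (j : Fin t)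
    (hj : 2 ≤ (j : ℕ)) :
    NF ht p lam (monomial e c * (X j ^ p j - hpoly ht p lam j)) = 0 := by
  have A : monomial e c * (X j ^ p j : MvPolynomial (Fin t) k)
      = monomial (e + Finsupp.single j (p j)) c := by
    rw [X_pow_eq_monomial, monomial_mul, mul_one]
  have B : monomial e c * (X (i1 ht) ^ p (i1 ht) : MvPolynomial (Fin t) k)
      = monomial (e + Finsupp.single (i1 ht) (p (i1 ht))) c := by
    rw [X_pow_eq_monomial, monomial_mul, mul_one]
  have D : monomial e c * (C (lam j) * X (i0 ht) ^ p (i0 ht) : MvPolynomial (Fin t) k)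
      = monomial (e + Finsupp.single (i0 ht) (p (i0 ht))) (c * lam j) := by
    rw [X_pow_eq_monomial, C_mul_monomial, monomial_mul, mul_one]
  have E : monomial e c * hpoly ht p lam j
      = monomial (e + Finsupp.single (i1 ht) (p (i1 ht))) c
        - monomial (e + Finsupp.single (i0 ht) (p (i0 ht))) (c * lam j) := by
    unfold hpoly; rw [mul_sub, B, D]
  rw [mul_sub, A, E, map_sub, map_sub, NF_monomial, NF_monomial, NF_monomial]
  rw [nf_add_single ht p lam e j hj (by have := hp j; omega),
      nf_add_low ht p lam e _ (single1_zero ht p), nf_add_low ht p lam e _ (single0_zero ht p)]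
  unfold hpoly
  simp only [X_pow_eq_monomial, map_mul]
  ring

lemma NF_of_mem (hp : ∀ i, 2 ≤ p i) (f : MvPolynomial (Fin t) k)
    (hf : f ∈ canonIdeal t ht p k lam) : NF ht p lam f = 0 := by
  obtain ⟨c, hc, rfl⟩ := Submodule.mem_span_set.mp hf
  rw [map_finsuppSum, Finsupp.sum]
  refine Finset.sum_eq_zero fun g hg => ?_
  obtain ⟨j, hj, hgeq⟩ := hc hg
  have hg' : g = X j ^ p j - hpoly ht p lam j := hgeq
  rw [smul_eq_mul]
  set r := c g with hr
  rw [hg', r.as_sum, Finset.sum_mul, map_sum]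
  exact Finset.sum_eq_zero fun v _ => NF_monomial_mul_gen ht p lam hp v _ j hj

lemma mem_iff_NF (hp : ∀ i, 2 ≤ p i) (f : MvPolynomial (Fin t) k) :
    f ∈ canonIdeal t ht p k lam ↔ NF ht p lam f = 0 := by
  refine ⟨NF_of_mem ht p lam hp f, fun h => ?_⟩
  have := Q_NF ht p lam f
  rw [h, map_zero] at this
  exact (Ideal.Quotient.eq_zero_iff_mem).mp this.symm

/-- evaluation-mod-p homomorphism on the free group -/
noncomputable def psi (j : Fin t) : (Fin t → ℤ) →+ ZMod (p j) :=
  (Int.castAddHom (ZMod (p j))).comp (Pi.evalAddMonoidHom (fun _ : Fin t => ℤ) j)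

lemma psi_single (j i : Fin t) (n : ℤ) :
    psi p j (Pi.single i n) = if i = j then (n : ZMod (p j)) else 0 := by
  by_cases h : i = j
  · subst h; simp [psi]
  · simp [psi, Pi.single_eq_of_ne (Ne.symm h), h]

/-- the induced homomorphism `L(p) → ZMod (p j)` for `2 ≤ j` -/
noncomputable def phiHom (ht0 : 0 < t) (j : Fin t) (hj : 2 ≤ (j : ℕ)) :
    LGrp t ht0 p →+ ZMod (p j) :=
  QuotientAddGroup.lift _ (psi p j) (by
    refine (AddSubgroup.closure_le _).mpr ?_
    rintro v ⟨i, rfl⟩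
    have h0j : (⟨0, ht0⟩ : Fin t) ≠ j := by
      intro h
      have : ((⟨0, ht0⟩ : Fin t) : ℕ) = (j : ℕ) := by rw [h]
      simp at this; omega
    simp only [SetLike.mem_coe, AddMonoidHom.mem_ker, map_sub, map_zsmul,
      psi_single, h0j, if_neg h0j]
    by_cases h : i = j
    · subst h
      simp
    · simp [h])

lemma phi_weight (j : Fin t) (hj : 2 ≤ (j : ℕ)) (e : Fin t →₀ ℕ) :
    phiHom p (by omega : 0 < t) j hj (Finsupp.weight (wtL t ht p) e) = (e j : ZMod (p j)) := by
  rw [Finsupp.weight_apply, map_finsuppSum]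
  have key : ∀ i : Fin t, ∀ n : ℕ,
      phiHom p (by omega : 0 < t) j hj (n • wtL t ht p i)
        = if i = j then (n : ZMod (p j)) else 0 := by
    intro i n
    rw [map_nsmul]
    have : phiHom p (by omega : 0 < t) j hj (wtL t ht p i)
        = if i = j then (1 : ZMod (p j)) else 0 := by
      show psi p j (Pi.single i 1) = _
      rw [psi_single]; simp
    rw [this]
    by_cases h : i = j <;> simp [h]
  rw [Finsupp.sum, Finset.sum_congr rfl (fun i _ => key i (e i)),
    Finset.sum_ite_eq' e.support j (fun i => (e i : ZMod (p j)))]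
  by_cases hjs : j ∈ e.support
  · simp [hjs]
  · rw [if_neg hjs, Finsupp.notMem_support_iff.mp hjs, Nat.cast_zero]

lemma hpoly_vars (j : Fin t) :
    (hpoly ht p lam j).vars ⊆ {i0 ht, i1 ht} := by
  unfold hpoly
  refine Finset.Subset.trans (vars_sub_subset _) ?_
  intro i hi
  rcases Finset.mem_union.mp hi with h | h
  · have := vars_pow (X (i1 ht) : MvPolynomial (Fin t) k) (p (i1 ht)) h
    rw [vars_X] at this
    simp only [Finset.mem_singleton] at this
    simp [this]
  · have h2 := vars_mul (C (lam j) : MvPolynomial (Fin t) k) (X (i0 ht) ^ p (i0 ht)) h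
    rcases Finset.mem_union.mp h2 with h3 | h3
    · rw [vars_C] at h3; exact absurd h3 (Finset.notMem_empty i)
    · have := vars_pow (X (i0 ht) : MvPolynomial (Fin t) k) (p (i0 ht)) h3
      rw [vars_X] at this
      simp only [Finset.mem_singleton] at this
      simp [this]

lemma prod_hpoly_low (q : Fin t → ℕ) (m : Fin t →₀ ℕ)
    (hm : m ∈ (∏ i : Fin t, hpoly ht p lam i ^ q i).support)
    (i : Fin t) (hi : 2 ≤ (i : ℕ)) : m i = 0 := by
  by_contra hne
  have hv : i ∈ (∏ i : Fin t, hpoly ht p lam i ^ q i).vars :=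
    (mem_vars i).mpr ⟨m, hm, Finsupp.mem_support_iff.mpr hne⟩
  have hv2 := vars_prod (fun i => hpoly ht p lam i ^ q i) hv
  rw [Finset.mem_biUnion] at hv2
  obtain ⟨j, _, hj⟩ := hv2
  have := hpoly_vars ht p lam j (vars_pow _ _ hj)
  rcases Finset.mem_insert.mp this with h | h
  · have : (i : ℕ) = ((i0 ht : Fin t) : ℕ) := by rw [h]
    simp [i0] at this; omega
  · rw [Finset.mem_singleton] at h
    have : (i : ℕ) = ((i1 ht : Fin t) : ℕ) := by rw [h]
    simp [i1] at this; omega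

lemma nf_support (e : Fin t →₀ ℕ) (m : Fin t →₀ ℕ) (hm : m ∈ (nf ht p lam e).support)
    (i : Fin t) (hi : 2 ≤ (i : ℕ)) : m i = e i % p i := by
  classical
  unfold nf at hm
  have h1 := support_mul _ _ hm
  rw [Finset.mem_add] at h1
  obtain ⟨a, ha, b, hb, rfl⟩ := h1
  rw [support_monomial, if_neg (one_ne_zero)] at ha
  rw [Finset.mem_singleton] at ha
  subst ha
  have hb0 : b i = 0 := prod_hpoly_low ht p lam _ b hb i hi
  rw [Finsupp.add_apply, hb0, Nat.add_zero, red_apply, if_pos hi]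

lemma hpoly_ne_zero (hp : ∀ i, 2 ≤ p i) (j : Fin t) : hpoly ht p lam j ≠ 0 := by
  intro h
  have hc := congrArg (coeff (Finsupp.single (i1 ht) (p (i1 ht)))) h
  unfold hpoly at hc
  rw [coeff_sub, coeff_C_mul, coeff_X_pow, coeff_X_pow, coeff_zero] at hc
  have hne : ¬ (Finsupp.single (i0 ht) (p (i0 ht))
      = Finsupp.single (i1 ht) (p (i1 ht)) : Prop) := by
    intro hs
    have := DFunLike.congr_fun hs (i0 ht)
    rw [Finsupp.single_eq_same] at this
    have h01 : (i0 ht : Fin t) ≠ i1 ht := by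
      intro hh
      have : ((i0 ht : Fin t) : ℕ) = ((i1 ht : Fin t) : ℕ) := by rw [hh]
      simp [i0, i1] at this
    rw [Finsupp.single_eq_of_ne' (Ne.symm h01)] at this
    have := hp (i0 ht); omega
  rw [if_pos rfl, if_neg hne] at hc
  simp at hc

lemma nf_ne_zero (hp : ∀ i, 2 ≤ p i) (e : Fin t →₀ ℕ) : nf ht p lam e ≠ 0 := by
  unfold nf
  refine mul_ne_zero ?_ ?_
  · rw [Ne, monomial_eq_zero]; exact one_ne_zero
  · refine Finset.prod_ne_zero_iff.mpr fun i _ => ?_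
    exact pow_ne_zero _ (hpoly_ne_zero ht p lam hp i)

lemma NF_shift (u : Fin t →₀ ℕ) (D : MvPolynomial (Fin t) k)
    (hD : ∀ m ∈ D.support, ∀ i : Fin t, 2 ≤ (i : ℕ) → m i = 0) :
    NF ht p lam (monomial u 1 * D) = nf ht p lam u * D := by
  conv_lhs => rw [D.as_sum, Finset.mul_sum, map_sum]
  conv_rhs => rw [D.as_sum, Finset.mul_sum]
  refine Finset.sum_congr rfl fun d hd => ?_
  rw [monomial_mul, one_mul, NF_monomial, nf_add_low ht p lam u d (hD d hd)]
  have hmc : (C (coeff d D) : MvPolynomial (Fin t) k) * monomial d 1 = monomial d (coeff d D) := by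
    rw [C_mul_monomial, mul_one]
  calc C (coeff d D) * (monomial d 1 * nf ht p lam u)
      = (C (coeff d D) * monomial d 1) * nf ht p lam u := by ring
    _ = nf ht p lam u * monomial d (coeff d D) := by rw [hmc]; ring

lemma extract (F : MvPolynomial (Fin t) k) (r : Fin t →₀ ℕ)
    (hr0 : ∀ i : Fin t, ¬ 2 ≤ (i : ℕ) → r i = 0)
    (hF : ∀ m ∈ F.support, ∀ i : Fin t, 2 ≤ (i : ℕ) → m i = r i) :
    ∃ A : MvPolynomial (Fin t) k, F = monomial r 1 * A ∧
      (∀ m ∈ A.support, ∀ i : Fin t, 2 ≤ (i : ℕ) → m i = 0) := by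
  classical
  refine ⟨∑ m ∈ F.support, monomial (m - r) (coeff m F), ?_, ?_⟩
  · conv_lhs => rw [F.as_sum]
    rw [Finset.mul_sum]
    refine Finset.sum_congr rfl fun m hm => ?_
    rw [monomial_mul, one_mul]
    have hrm : r + (m - r) = m := by
      ext i
      rw [Finsupp.add_apply, Finsupp.tsub_apply]
      by_cases hi : 2 ≤ (i : ℕ)
      · rw [hF m hm i hi]; omega
      · rw [hr0 i hi]; omega
    rw [hrm]
  · intro m hm i hi
    have h1 := support_sum hm
    rw [Finset.mem_biUnion] at h1
    obtain ⟨m', hm', h2⟩ := h1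
    have h3 := support_monomial_subset h2
    rw [Finset.mem_singleton] at h3
    subst h3
    rw [Finsupp.tsub_apply, hF m' hm' i hi]
    omega

end GDaux

/-- `S(p,λ)` is an `L`-graded domain: if `f, g` are `L`-homogeneous
polynomials not in `I`, then `f * g ∉ I`. -/
theorem graded_domain (t : ℕ) (ht : 2 ≤ t) (p : Fin t → ℕ) (hp : ∀ i, 2 ≤ p i)
    (k : Type) [Field k] [IsAlgClosed k] (lam : Fin t → k)
    (hlam0 : ∀ i : Fin t, 2 ≤ (i : ℕ) → lam i ≠ 0)
    (hlam1 : ∀ i j : Fin t, 2 ≤ (i : ℕ) → 2 ≤ (j : ℕ) → i ≠ j → lam i ≠ lam j)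
    (f g : MvPolynomial (Fin t) k) (df dg : LGrp t (by omega) p)
    (hf : f.IsWeightedHomogeneous (wtL t ht p) df)
    (hg : g.IsWeightedHomogeneous (wtL t ht p) dg)
    (hfI : f ∉ canonIdeal t ht p k lam)
    (hgI : g ∉ canonIdeal t ht p k lam) :
    f * g ∉ canonIdeal t ht p k lam := by
  classical
  intro hmem
  set NFm := GDaux.NF ht p lam with hNFm
  have memiff := GDaux.mem_iff_NF ht p lam hp
  have hF : NFm f ≠ 0 := fun h => hfI ((memiff f).mpr h)
  have hG : NFm g ≠ 0 := fun h => hgI ((memiff g).mpr h)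
  have hf0 : f ≠ 0 := fun h => hF (by rw [hNFm, h, map_zero])
  have hg0 : g ≠ 0 := fun h => hG (by rw [hNFm, h, map_zero])
  obtain ⟨e₀, he₀⟩ := MvPolynomial.support_nonempty.mpr hf0
  obtain ⟨e₁, he₁⟩ := MvPolynomial.support_nonempty.mpr hg0
  have supp_NF : ∀ h : MvPolynomial (Fin t) k, (NFm h).support ⊆
      h.support.biUnion fun e => (GDaux.nf ht p lam e).support := by
    intro h m hm
    have h2 : NFm h = ∑ e ∈ h.support, MvPolynomial.C (MvPolynomial.coeff e h) *
        GDaux.nf ht p lam e :=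
      MvPolynomial.sum_def (b := fun e c => MvPolynomial.C c * GDaux.nf ht p lam e)
    rw [h2] at hm
    have h3 := MvPolynomial.support_sum hm
    rw [Finset.mem_biUnion] at h3 ⊢
    obtain ⟨e, he, hme⟩ := h3
    refine ⟨e, he, ?_⟩
    rw [← MvPolynomial.smul_eq_C_mul] at hme
    exact Finsupp.support_smul hme
  have resid : ∀ (h : MvPolynomial (Fin t) k) (d : LGrp t (by omega) p),
      h.IsWeightedHomogeneous (wtL t ht p) d →
      ∀ e ∈ h.support, ∀ e' ∈ h.support, ∀ i : Fin t, 2 ≤ (i : ℕ) →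
        e i % p i = e' i % p i := by
    intro h d hh e he e' he' i hi
    have h1 := hh (MvPolynomial.mem_support_iff.mp he)
    have h2 := hh (MvPolynomial.mem_support_iff.mp he')
    have h3 := congrArg (GDaux.phiHom p (by omega : 0 < t) i hi) (h1.trans h2.symm)
    rw [GDaux.phi_weight ht p i hi e, GDaux.phi_weight ht p i hi e'] at h3
    exact (ZMod.natCast_eq_natCast_iff' _ _ _).mp h3
  set r : Fin t →₀ ℕ :=
    Finsupp.equivFunOnFinite.symm fun i => if 2 ≤ (i : ℕ) then e₀ i % p i else 0 with hrdef
  set s : Fin t →₀ ℕ :=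
    Finsupp.equivFunOnFinite.symm fun i => if 2 ≤ (i : ℕ) then e₁ i % p i else 0 with hsdef
  have hr0 : ∀ i : Fin t, ¬ 2 ≤ (i : ℕ) → r i = 0 := fun i hi => by
    simp only [hrdef, Finsupp.equivFunOnFinite_symm_apply_apply, if_neg hi]
  have hs0 : ∀ i : Fin t, ¬ 2 ≤ (i : ℕ) → s i = 0 := fun i hi => by
    simp only [hsdef, Finsupp.equivFunOnFinite_symm_apply_apply, if_neg hi]
  have hFsup : ∀ m ∈ (NFm f).support, ∀ i : Fin t, 2 ≤ (i : ℕ) → m i = r i := by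
    intro m hm i hi
    obtain ⟨e, he, hme⟩ := Finset.mem_biUnion.mp (supp_NF f hm)
    rw [GDaux.nf_support ht p lam e m hme i hi]
    have h4 := resid f df hf e he e₀ he₀ i hi
    simp only [hrdef, Finsupp.equivFunOnFinite_symm_apply_apply, if_pos hi]
    exact h4
  have hGsup : ∀ m ∈ (NFm g).support, ∀ i : Fin t, 2 ≤ (i : ℕ) → m i = s i := by
    intro m hm i hi
    obtain ⟨e, he, hme⟩ := Finset.mem_biUnion.mp (supp_NF g hm)
    rw [GDaux.nf_support ht p lam e m hme i hi]
    have h4 := resid g dg hg e he e₁ he₁ i hi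
    simp only [hsdef, Finsupp.equivFunOnFinite_symm_apply_apply, if_pos hi]
    exact h4
  obtain ⟨A, hA, hAsup⟩ := GDaux.extract (NFm f) r hr0 hFsup
  obtain ⟨B, hB, hBsup⟩ := GDaux.extract (NFm g) s hs0 hGsup
  have hA0 : A ≠ 0 := by intro h; rw [h, mul_zero] at hA; exact hF hA
  have hB0 : B ≠ 0 := by intro h; rw [h, mul_zero] at hB; exact hG hB
  have hfg0 : NFm (f * g) = 0 := (memiff _).mp hmem
  have hcong : NFm (NFm f * NFm g) = 0 := by
    have h1 : Ideal.Quotient.mk (canonIdeal t ht p k lam) (f * g)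
        = Ideal.Quotient.mk (canonIdeal t ht p k lam) (NFm f * NFm g) := by
      rw [map_mul, map_mul, hNFm, GDaux.Q_NF ht p lam f, GDaux.Q_NF ht p lam g]
    have hmemI : f * g - NFm f * NFm g ∈ canonIdeal t ht p k lam := Ideal.Quotient.eq.mp h1
    have h2 := GDaux.NF_of_mem ht p lam hp _ hmemI
    rw [hNFm] at hfg0 ⊢
    rw [map_sub, hfg0, zero_sub, neg_eq_zero] at h2
    exact h2
  have hmono : (MvPolynomial.monomial r (1 : k)) * MvPolynomial.monomial s 1
      = MvPolynomial.monomial (r + s) 1 := by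
    rw [MvPolynomial.monomial_mul, one_mul]
  have hprod : NFm f * NFm g = MvPolynomial.monomial (r + s) 1 * (A * B) := by
    rw [hA, hB, ← hmono]; ring
  have hABsup : ∀ m ∈ (A * B).support, ∀ i : Fin t, 2 ≤ (i : ℕ) → m i = 0 := by
    intro m hm i hi
    have h1 := MvPolynomial.support_mul A B hm
    rw [Finset.mem_add] at h1
    obtain ⟨a, ha, b, hb, rfl⟩ := h1
    rw [Finsupp.add_apply, hAsup a ha i hi, hBsup b hb i hi]
  rw [hprod, hNFm, GDaux.NF_shift ht p lam (r + s) (A * B) hABsup] at hcong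
  exact (mul_ne_zero (GDaux.nf_ne_zero ht p lam hp (r + s)) (mul_ne_zero hA0 hB0)) hcong
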